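/- Fix an integer k ≥ 2 and p ∈ (0, 1/2]. Let Q : {0,1}^k → ℝ be a probability mass function (Q(x) ≥ 0 for all x and Σ_x Q(x) = 1) such that Q(1^k) = 0 and such that for every index i ∈ {1,…,k}, marginalizing out the i-th bit of Q yields k−1 independent p-biased bits (i.e., for every y ∈ {0,1}^{k−1} with m' ones, the sum over b ∈ {0,1} of Q applied to the string obtained from y by inserting b at position i equals p^{m'} (1−p)^{(k−1)−m'}). Then Q = P_k, i.e., Q(x) = p^m (1−p)^{k−m} − (−1)^{k−m} p^k for every x ∈ {0,1}^k with m ones. -/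
import Mathlib


open Finset

/-- The number of ones in a bit string. -/
def ones {k : ℕ} (x : Fin k → Bool) : ℕ := (Finset.univ.filter fun i => x i = true).card

/-- The planted per-coordinate distribution
`P_k(x) = p^m (1-p)^{k-m} - (-1)^{k-m} p^k`, where `m` is the number of ones in `x`. -/
noncomputable def Pk (k : ℕ) (p : ℝ) (x : Fin k → Bool) : ℝ :=
  p ^ ones x * (1 - p) ^ (k - ones x) - (-1 : ℝ) ^ (k - ones x) * p ^ k

/-- Auxiliary: number of zeros. -/
def zeros {k : ℕ} (x : Fin k → Bool) : ℕ := (Finset.univ.filter fun i => x i = false).card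

lemma ones_as_sum {k : ℕ} (x : Fin k → Bool) :
    ones x = ∑ i : Fin k, (if x i = true then 1 else 0) := by
  rw [ones, Finset.card_filter]

lemma zeros_as_sum {k : ℕ} (x : Fin k → Bool) :
    zeros x = ∑ i : Fin k, (if x i = false then 1 else 0) := by
  rw [zeros, Finset.card_filter]

lemma ones_insertNth {k : ℕ} (i : Fin (k + 1)) (b : Bool) (y : Fin k → Bool) :
    ones (i.insertNth b y) = (if b = true then 1 else 0) + ones y := by
  rw [ones_as_sum, ones_as_sum, Fin.sum_univ_succAbove _ i]
  simp [Fin.insertNth_apply_same, Fin.insertNth_apply_succAbove]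

lemma zeros_insertNth {k : ℕ} (i : Fin (k + 1)) (b : Bool) (y : Fin k → Bool) :
    zeros (i.insertNth b y) = (if b = false then 1 else 0) + zeros y := by
  rw [zeros_as_sum, zeros_as_sum, Fin.sum_univ_succAbove _ i]
  simp [Fin.insertNth_apply_same, Fin.insertNth_apply_succAbove]

lemma ones_le {k : ℕ} (y : Fin k → Bool) : ones y ≤ k := by
  simpa [ones] using (Finset.card_filter_le Finset.univ fun i => y i = true)

lemma Pk_marg (k : ℕ) (p : ℝ) (i : Fin (k + 1)) (y : Fin k → Bool) :
    (∑ b : Bool, Pk (k + 1) p (i.insertNth b y))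
      = p ^ ones y * (1 - p) ^ (k - ones y) := by
  have hm := ones_le y
  rw [Fintype.sum_bool]
  simp only [Pk, ones_insertNth]
  norm_num
  have h1 : k + 1 - (1 + ones y) = k - ones y := by omega
  have h2 : k + 1 - ones y = (k - ones y) + 1 := by omega
  rw [h1, h2]
  ring

lemma Pk_allTrue (k : ℕ) (p : ℝ) : Pk k p (fun _ => true) = 0 := by
  have : ones (fun _ : Fin k => true) = k := by simp [ones]
  simp [Pk, this]

lemma zeros_eq_zero {k : ℕ} (x : Fin k → Bool) (h : zeros x = 0) : x = fun _ => true := by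
  funext i
  by_contra hi
  have hxi : x i = false := by
    cases hx : x i
    · rfl
    · exact absurd hx hi
  have : i ∈ Finset.univ.filter fun j => x j = false := by simp [hxi]
  have hc := Finset.card_pos.mpr ⟨i, this⟩
  rw [zeros] at h
  omega

/-- uniqueness: (with strings of length `k + 1 ≥ 2` playing the role of the
length-`k` strings of the paper) If `Q` is a probability mass function on `{0,1}^{k+1}`
with `Q(1^{k+1}) = 0` such that marginalizing out any one bit yields `k` independent
`p`-biased bits, then `Q = P_{k+1}`. -/
theorem stmt9 (k : ℕ) (hk : 1 ≤ k) (p : ℝ) (hp0 : 0 < p) (hp2 : p ≤ 1 / 2)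
    (Q : (Fin (k + 1) → Bool) → ℝ)
    (hQnonneg : ∀ x, 0 ≤ Q x)
    (hQsum : (∑ x : Fin (k + 1) → Bool, Q x) = 1)
    (hQones : Q (fun _ => true) = 0)
    (hQmarg : ∀ (i : Fin (k + 1)) (y : Fin k → Bool),
      (∑ b : Bool, Q (i.insertNth b y)) = p ^ ones y * (1 - p) ^ (k - ones y)) :
    ∀ x : Fin (k + 1) → Bool, Q x = Pk (k + 1) p x := by
  suffices h : ∀ n (x : Fin (k + 1) → Bool), zeros x = n → Q x = Pk (k + 1) p x by
    intro x; exact h (zeros x) x rfl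
  intro n
  induction n with
  | zero =>
    intro x hx
    rw [zeros_eq_zero x hx, hQones, Pk_allTrue]
  | succ n ih =>
    intro x hx
    have hpos : 0 < zeros x := by omega
    obtain ⟨i, hi⟩ := Finset.card_pos.mp (by simpa [zeros] using hpos)
    have hxi : x i = false := by simpa using hi
    set y : Fin k → Bool := i.removeNth x with hy
    have hxeq : x = i.insertNth false y := by
      rw [← hxi, hy]; exact (Fin.insertNth_self_removeNth i x).symm
    have hzy : zeros y = n := by
      have h := zeros_insertNth i false y
      rw [← hxeq, hx] at h
      simp at h
      omega
    have hzx' : zeros (i.insertNth true y) = n := by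
      rw [zeros_insertNth]
      simpa using hzy
    have hIH : Q (i.insertNth true y) = Pk (k + 1) p (i.insertNth true y) :=
      ih _ hzx'
    have hmarg := hQmarg i y
    have hPmarg := Pk_marg k p i y
    rw [Fintype.sum_bool] at hmarg hPmarg
    rw [hxeq]
    linarith
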